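/- Let T^α_β(u) (α,β ∈ {1,2}) satisfy the Yangian quadratic relation (u−v)·T^{α₁}_{β₁}(u)T^{α₂}_{β₂}(v) + η·T^{α₂}_{β₁}(u)T^{α₁}_{β₂}(v) = (u−v)·T^{α₂}_{β₂}(v)T^{α₁}_{β₁}(u) + η·T^{α₂}_{β₁}(v)T^{α₁}_{β₂}(u). Then the quantum determinant d(u) := T^1_1(u)T^2_2(u+η) − T^2_1(u)T^1_2(u+η) is central: [d(u), T^γ_δ(v)] = 0 for all γ, δ ∈ {1,2} and all u, v. -/

import Mathlib

open Polynomial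

/-- Embed `p(·) ∈ A[X]` as a polynomial in the variable `u` inside `A[v][u]`. -/
noncomputable def inU {A : Type*} [Ring A] (p : A[X]) : Polynomial (A[X]) :=
  p.map Polynomial.C

/-- Embed `p(·) ∈ A[X]` as a polynomial in the variable `v` inside `A[v][u]`. -/
noncomputable def inV {A : Type*} [Ring A] (p : A[X]) : Polynomial (A[X]) :=
  Polynomial.C p

/-- The shifted polynomial `u ↦ p(u + c)`. -/
noncomputable def shiftBy {A : Type*} [Ring A] (c : A) (p : A[X]) : A[X] :=
  p.comp (Polynomial.X + Polynomial.C c)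

private lemma central_C_mul {A : Type*} [Semiring A] {a : A} (ha : ∀ x, a * x = x * a)
    (p : A[X]) : C a * p = p * C a := by
  ext n
  simp [coeff_C_mul, coeff_mul_C, ha]

private lemma map_central {R A : Type*} [Semiring R] [Semiring A] (f : R →+* A)
    (hf : ∀ r x, f r * x = x * f r) (s : R[X]) (p : A[X]) :
    s.map f * p = p * s.map f := by
  induction s using Polynomial.induction_on' with
  | add q r hq hr => simp [Polynomial.map_add, add_mul, mul_add, hq, hr]
  | monomial n a =>
      rw [Polynomial.map_monomial, ← C_mul_X_pow_eq_monomial, mul_assoc, X_pow_mul,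
        ← mul_assoc, central_C_mul (hf a) p, mul_assoc, ← X_pow_mul, ← mul_assoc]

private lemma key_lemma {S : Type*} [CommRing S] {B : Type*} [Ring B] [Algebra S B]
    (w h : S) (XU XP YV : Fin 2 → Fin 2 → B)
    (K1 : ∀ i j k l : Fin 2, w • (XU i j * YV k l) + h • (XU k j * YV i l)
        = w • (YV k l * XU i j) + h • (YV k j * XU i l))
    (K2 : ∀ i j k l : Fin 2, (w + h) • (XP i j * YV k l) + h • (XP k j * YV i l)
        = (w + h) • (YV k l * XP i j) + h • (YV k j * XP i l))
    (K3 : ∀ i j k l : Fin 2, h • (XP k l * XU i j) + h • (XU k j * XP i l)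
        = h • (XU i j * XP k l) + h • (XP k j * XU i l))
    (γ δ : Fin 2) :
    (w * (w + h + h)) • ((XU 0 0 * XP 1 1 - XU 1 0 * XP 0 1) * YV γ δ)
      = (w * (w + h + h)) • (YV γ δ * (XU 0 0 * XP 1 1 - XU 1 0 * XP 0 1)) := by
  fin_cases γ <;> fin_cases δ
  · rw [← sub_eq_zero]
    have E0 : (h) • (((w • (XU 0 0 * YV 0 0) + h • (XU 0 0 * YV 0 0)) - (w • (YV 0 0 * XU 0 0) + h • (YV 0 0 * XU 0 0))) * XP 1 1) = 0 := by
      rw [sub_eq_zero_of_eq (K1 0 0 0 0)]; simp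
    have E1 : (w) • (((w • (XU 0 0 * YV 0 0) + h • (XU 0 0 * YV 0 0)) - (w • (YV 0 0 * XU 0 0) + h • (YV 0 0 * XU 0 0))) * XP 1 1) = 0 := by
      rw [sub_eq_zero_of_eq (K1 0 0 0 0)]; simp
    have E2 : (h) • (((w • (XU 0 0 * YV 0 1) + h • (XU 0 0 * YV 0 1)) - (w • (YV 0 1 * XU 0 0) + h • (YV 0 0 * XU 0 1))) * XP 1 0) = 0 := by
      rw [sub_eq_zero_of_eq (K1 0 0 0 1)]; simp
    have E3 : (h) • (((w • (XU 1 0 * YV 0 0) + h • (XU 0 0 * YV 1 0)) - (w • (YV 0 0 * XU 1 0) + h • (YV 0 0 * XU 1 0))) * XP 0 1) = 0 := by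
      rw [sub_eq_zero_of_eq (K1 1 0 0 0)]; simp
    have E4 : (w) • (((w • (XU 1 0 * YV 0 0) + h • (XU 0 0 * YV 1 0)) - (w • (YV 0 0 * XU 1 0) + h • (YV 0 0 * XU 1 0))) * XP 0 1) = 0 := by
      rw [sub_eq_zero_of_eq (K1 1 0 0 0)]; simp
    have E5 : (h) • (((w • (XU 1 0 * YV 0 1) + h • (XU 0 0 * YV 1 1)) - (w • (YV 0 1 * XU 1 0) + h • (YV 0 0 * XU 1 1))) * XP 0 0) = 0 := by
      rw [sub_eq_zero_of_eq (K1 1 0 0 1)]; simp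
    have E6 : (w) • (XU 1 0 * (((w + h) • (XP 0 1 * YV 0 0) + h • (XP 0 1 * YV 0 0)) - ((w + h) • (YV 0 0 * XP 0 1) + h • (YV 0 1 * XP 0 0)))) = 0 := by
      rw [sub_eq_zero_of_eq (K2 0 1 0 0)]; simp
    have E7 : (h) • (XU 0 0 * (((w + h) • (XP 0 1 * YV 1 0) + h • (XP 1 1 * YV 0 0)) - ((w + h) • (YV 1 0 * XP 0 1) + h • (YV 1 1 * XP 0 0)))) = 0 := by
      rw [sub_eq_zero_of_eq (K2 0 1 1 0)]; simp
    have E8 : (h) • (XU 0 0 * (((w + h) • (XP 1 1 * YV 0 0) + h • (XP 0 1 * YV 1 0)) - ((w + h) • (YV 0 0 * XP 1 1) + h • (YV 0 1 * XP 1 0)))) = 0 := by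
      rw [sub_eq_zero_of_eq (K2 1 1 0 0)]; simp
    have E9 : (w) • (XU 0 0 * (((w + h) • (XP 1 1 * YV 0 0) + h • (XP 0 1 * YV 1 0)) - ((w + h) • (YV 0 0 * XP 1 1) + h • (YV 0 1 * XP 1 0)))) = 0 := by
      rw [sub_eq_zero_of_eq (K2 1 1 0 0)]; simp
    have E10 : (w) • (YV 0 1 * ((h • (XP 1 0 * XU 0 0) + h • (XU 1 0 * XP 0 0)) - (h • (XU 0 0 * XP 1 0) + h • (XP 1 0 * XU 0 0)))) = 0 := by
      rw [sub_eq_zero_of_eq (K3 0 0 1 0)]; simp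
    have E11 : (h) • (YV 0 0 * ((h • (XP 1 1 * XU 0 0) + h • (XU 1 0 * XP 0 1)) - (h • (XU 0 0 * XP 1 1) + h • (XP 1 0 * XU 0 1)))) = 0 := by
      rw [sub_eq_zero_of_eq (K3 0 0 1 1)]; simp
    have E12 : (h) • (YV 0 0 * ((h • (XP 1 0 * XU 0 1) + h • (XU 1 1 * XP 0 0)) - (h • (XU 0 1 * XP 1 0) + h • (XP 1 1 * XU 0 0)))) = 0 := by
      rw [sub_eq_zero_of_eq (K3 0 1 1 0)]; simp
    calc (w * (w + h + h)) • ((XU 0 0 * XP 1 1 - XU 1 0 * XP 0 1) * YV 0 0) - (w * (w + h + h)) • (YV 0 0 * (XU 0 0 * XP 1 1 - XU 1 0 * XP 0 1))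
        = (h) • (((w • (XU 0 0 * YV 0 0) + h • (XU 0 0 * YV 0 0)) - (w • (YV 0 0 * XU 0 0) + h • (YV 0 0 * XU 0 0))) * XP 1 1) + (w) • (((w • (XU 0 0 * YV 0 0) + h • (XU 0 0 * YV 0 0)) - (w • (YV 0 0 * XU 0 0) + h • (YV 0 0 * XU 0 0))) * XP 1 1) + (h) • (((w • (XU 0 0 * YV 0 1) + h • (XU 0 0 * YV 0 1)) - (w • (YV 0 1 * XU 0 0) + h • (YV 0 0 * XU 0 1))) * XP 1 0) - (h) • (((w • (XU 1 0 * YV 0 0) + h • (XU 0 0 * YV 1 0)) - (w • (YV 0 0 * XU 1 0) + h • (YV 0 0 * XU 1 0))) * XP 0 1) - (w) • (((w • (XU 1 0 * YV 0 0) + h • (XU 0 0 * YV 1 0)) - (w • (YV 0 0 * XU 1 0) + h • (YV 0 0 * XU 1 0))) * XP 0 1) - (h) • (((w • (XU 1 0 * YV 0 1) + h • (XU 0 0 * YV 1 1)) - (w • (YV 0 1 * XU 1 0) + h • (YV 0 0 * XU 1 1))) * XP 0 0) - (w) • (XU 1 0 * (((w + h) • (XP 0 1 * YV 0 0) + h •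 (XP 0 1 * YV 0 0)) - ((w + h) • (YV 0 0 * XP 0 1) + h • (YV 0 1 * XP 0 0)))) - (h) • (XU 0 0 * (((w + h) • (XP 0 1 * YV 1 0) + h • (XP 1 1 * YV 0 0)) - ((w + h) • (YV 1 0 * XP 0 1) + h • (YV 1 1 * XP 0 0)))) + (h) • (XU 0 0 * (((w + h) • (XP 1 1 * YV 0 0) + h • (XP 0 1 * YV 1 0)) - ((w + h) • (YV 0 0 * XP 1 1) + h • (YV 0 1 * XP 1 0)))) + (w) • (XU 0 0 * (((w + h) • (XP 1 1 * YV 0 0) + h • (XP 0 1 * YV 1 0)) - ((w + h) • (YV 0 0 * XP 1 1) + h • (YV 0 1 * XP 1 0)))) - (w) • (YV 0 1 * ((h • (XP 1 0 * XU 0 0) + h • (XU 1 0 * XP 0 0)) - (h • (XU 0 0 * XP 1 0) + h • (XP 1 0 * XU 0 0)))) - (h) • (YV 0 0 * ((h • (XP 1 1 * XU 0 0) + h • (XU 1 0 * XP 0 1)) - (h • (XU 0 0 * XP 1 1) + h • (XP 1 0 * XU 0 1)))) - (h) • (YV 0 0 * ((h • (XP 1 0 * XU 0 1) + h • (XU 1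 1 * XP 0 0)) - (h • (XU 0 1 * XP 1 0) + h • (XP 1 1 * XU 0 0)))) := by
          simp only [smul_add, smul_sub, add_smul, smul_smul, mul_add, add_mul, mul_sub,
            sub_mul, smul_mul_assoc, mul_smul_comm, mul_assoc]
          module
      _ = 0 := by rw [E0, E1, E2, E3, E4, E5, E6, E7, E8, E9, E10, E11, E12]; simp
  · rw [← sub_eq_zero]
    have E0 : (h) • (((w • (XU 0 0 * YV 0 1) + h • (XU 0 0 * YV 0 1)) - (w • (YV 0 1 * XU 0 0) + h • (YV 0 0 * XU 0 1))) * XP 1 1) = 0 := by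
      rw [sub_eq_zero_of_eq (K1 0 0 0 1)]; simp
    have E1 : (w) • (((w • (XU 0 0 * YV 0 1) + h • (XU 0 0 * YV 0 1)) - (w • (YV 0 1 * XU 0 0) + h • (YV 0 0 * XU 0 1))) * XP 1 1) = 0 := by
      rw [sub_eq_zero_of_eq (K1 0 0 0 1)]; simp
    have E2 : (h) • (((w • (XU 1 0 * YV 0 1) + h • (XU 0 0 * YV 1 1)) - (w • (YV 0 1 * XU 1 0) + h • (YV 0 0 * XU 1 1))) * XP 0 1) = 0 := by
      rw [sub_eq_zero_of_eq (K1 1 0 0 1)]; simp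
    have E3 : (w) • (((w • (XU 1 0 * YV 0 1) + h • (XU 0 0 * YV 1 1)) - (w • (YV 0 1 * XU 1 0) + h • (YV 0 0 * XU 1 1))) * XP 0 1) = 0 := by
      rw [sub_eq_zero_of_eq (K1 1 0 0 1)]; simp
    have E4 : (w) • (XU 1 0 * (((w + h) • (XP 0 1 * YV 0 1) + h • (XP 0 1 * YV 0 1)) - ((w + h) • (YV 0 1 * XP 0 1) + h • (YV 0 1 * XP 0 1)))) = 0 := by
      rw [sub_eq_zero_of_eq (K2 0 1 0 1)]; simp
    have E5 : (h) • (XU 0 0 * (((w + h) • (XP 0 1 * YV 1 1) + h • (XP 1 1 * YV 0 1)) - ((w + h) • (YV 1 1 * XP 0 1) + h • (YV 1 1 * XP 0 1)))) = 0 := by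
      rw [sub_eq_zero_of_eq (K2 0 1 1 1)]; simp
    have E6 : (h) • (XU 0 0 * (((w + h) • (XP 1 1 * YV 0 1) + h • (XP 0 1 * YV 1 1)) - ((w + h) • (YV 0 1 * XP 1 1) + h • (YV 0 1 * XP 1 1)))) = 0 := by
      rw [sub_eq_zero_of_eq (K2 1 1 0 1)]; simp
    have E7 : (w) • (XU 0 0 * (((w + h) • (XP 1 1 * YV 0 1) + h • (XP 0 1 * YV 1 1)) - ((w + h) • (YV 0 1 * XP 1 1) + h • (YV 0 1 * XP 1 1)))) = 0 := by
      rw [sub_eq_zero_of_eq (K2 1 1 0 1)]; simp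
    have E8 : (h) • (YV 0 0 * ((h • (XP 1 1 * XU 0 1) + h • (XU 1 1 * XP 0 1)) - (h • (XU 0 1 * XP 1 1) + h • (XP 1 1 * XU 0 1)))) = 0 := by
      rw [sub_eq_zero_of_eq (K3 0 1 1 1)]; simp
    have E9 : (w) • (YV 0 0 * ((h • (XP 1 1 * XU 0 1) + h • (XU 1 1 * XP 0 1)) - (h • (XU 0 1 * XP 1 1) + h • (XP 1 1 * XU 0 1)))) = 0 := by
      rw [sub_eq_zero_of_eq (K3 0 1 1 1)]; simp
    calc (w * (w + h + h)) • ((XU 0 0 * XP 1 1 - XU 1 0 * XP 0 1) * YV 0 1) - (w * (w + h + h)) • (YV 0 1 * (XU 0 0 * XP 1 1 - XU 1 0 * XP 0 1))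
        = (h) • (((w • (XU 0 0 * YV 0 1) + h • (XU 0 0 * YV 0 1)) - (w • (YV 0 1 * XU 0 0) + h • (YV 0 0 * XU 0 1))) * XP 1 1) + (h) • (((w • (XU 0 0 * YV 0 1) + h • (XU 0 0 * YV 0 1)) - (w • (YV 0 1 * XU 0 0) + h • (YV 0 0 * XU 0 1))) * XP 1 1) + (w) • (((w • (XU 0 0 * YV 0 1) + h • (XU 0 0 * YV 0 1)) - (w • (YV 0 1 * XU 0 0) + h • (YV 0 0 * XU 0 1))) * XP 1 1) - (h) • (((w • (XU 1 0 * YV 0 1) + h • (XU 0 0 * YV 1 1)) - (w • (YV 0 1 * XU 1 0) + h • (YV 0 0 * XU 1 1))) * XP 0 1) - (h) • (((w • (XU 1 0 * YV 0 1) + h • (XU 0 0 * YV 1 1)) - (w • (YV 0 1 * XU 1 0) + h • (YV 0 0 * XU 1 1))) * XP 0 1) - (w) • (((w • (XU 1 0 * YV 0 1) + h • (XU 0 0 * YV 1 1)) - (w • (YV 0 1 * XU 1 0) + h • (YV 0 0 * XU 1 1))) * XP 0 1) - (w) • (XU 1 0 * (((w + h) • (XP 0 1 * YV 0 1) + h •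 (XP 0 1 * YV 0 1)) - ((w + h) • (YV 0 1 * XP 0 1) + h • (YV 0 1 * XP 0 1)))) - (h) • (XU 0 0 * (((w + h) • (XP 0 1 * YV 1 1) + h • (XP 1 1 * YV 0 1)) - ((w + h) • (YV 1 1 * XP 0 1) + h • (YV 1 1 * XP 0 1)))) + (h) • (XU 0 0 * (((w + h) • (XP 1 1 * YV 0 1) + h • (XP 0 1 * YV 1 1)) - ((w + h) • (YV 0 1 * XP 1 1) + h • (YV 0 1 * XP 1 1)))) + (w) • (XU 0 0 * (((w + h) • (XP 1 1 * YV 0 1) + h • (XP 0 1 * YV 1 1)) - ((w + h) • (YV 0 1 * XP 1 1) + h • (YV 0 1 * XP 1 1)))) - (h) • (YV 0 0 * ((h • (XP 1 1 * XU 0 1) + h • (XU 1 1 * XP 0 1)) - (h • (XU 0 1 * XP 1 1) + h • (XP 1 1 * XU 0 1)))) - (h) • (YV 0 0 * ((h • (XP 1 1 * XU 0 1) + h • (XU 1 1 * XP 0 1)) - (h • (XU 0 1 * XP 1 1) + h • (XP 1 1 * XU 0 1)))) - (w) • (YV 0 0 * ((h • (XP 1 1 * XU 0 1) + h • (XU 1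 1 * XP 0 1)) - (h • (XU 0 1 * XP 1 1) + h • (XP 1 1 * XU 0 1)))) := by
          simp only [smul_add, smul_sub, add_smul, smul_smul, mul_add, add_mul, mul_sub,
            sub_mul, smul_mul_assoc, mul_smul_comm, mul_assoc]
          module
      _ = 0 := by rw [E0, E1, E2, E3, E4, E5, E6, E7, E8, E9]; simp
  · rw [← sub_eq_zero]
    have E0 : (h) • (((w • (XU 0 0 * YV 1 0) + h • (XU 1 0 * YV 0 0)) - (w • (YV 1 0 * XU 0 0) + h • (YV 1 0 * XU 0 0))) * XP 1 1) = 0 := by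
      rw [sub_eq_zero_of_eq (K1 0 0 1 0)]; simp
    have E1 : (w) • (((w • (XU 0 0 * YV 1 0) + h • (XU 1 0 * YV 0 0)) - (w • (YV 1 0 * XU 0 0) + h • (YV 1 0 * XU 0 0))) * XP 1 1) = 0 := by
      rw [sub_eq_zero_of_eq (K1 0 0 1 0)]; simp
    have E2 : (h) • (((w • (XU 0 0 * YV 1 1) + h • (XU 1 0 * YV 0 1)) - (w • (YV 1 1 * XU 0 0) + h • (YV 1 0 * XU 0 1))) * XP 1 0) = 0 := by
      rw [sub_eq_zero_of_eq (K1 0 0 1 1)]; simp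
    have E3 : (h) • (((w • (XU 1 0 * YV 1 0) + h • (XU 1 0 * YV 1 0)) - (w • (YV 1 0 * XU 1 0) + h • (YV 1 0 * XU 1 0))) * XP 0 1) = 0 := by
      rw [sub_eq_zero_of_eq (K1 1 0 1 0)]; simp
    have E4 : (w) • (((w • (XU 1 0 * YV 1 0) + h • (XU 1 0 * YV 1 0)) - (w • (YV 1 0 * XU 1 0) + h • (YV 1 0 * XU 1 0))) * XP 0 1) = 0 := by
      rw [sub_eq_zero_of_eq (K1 1 0 1 0)]; simp
    have E5 : (h) • (((w • (XU 1 0 * YV 1 1) + h • (XU 1 0 * YV 1 1)) - (w • (YV 1 1 * XU 1 0) + h • (YV 1 0 * XU 1 1))) * XP 0 0) = 0 := by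
      rw [sub_eq_zero_of_eq (K1 1 0 1 1)]; simp
    have E6 : (h) • (XU 1 0 * (((w + h) • (XP 0 1 * YV 1 0) + h • (XP 1 1 * YV 0 0)) - ((w + h) • (YV 1 0 * XP 0 1) + h • (YV 1 1 * XP 0 0)))) = 0 := by
      rw [sub_eq_zero_of_eq (K2 0 1 1 0)]; simp
    have E7 : (w) • (XU 1 0 * (((w + h) • (XP 0 1 * YV 1 0) + h • (XP 1 1 * YV 0 0)) - ((w + h) • (YV 1 0 * XP 0 1) + h • (YV 1 1 * XP 0 0)))) = 0 := by
      rw [sub_eq_zero_of_eq (K2 0 1 1 0)]; simp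
    have E8 : (h) • (XU 1 0 * (((w + h) • (XP 1 1 * YV 0 0) + h • (XP 0 1 * YV 1 0)) - ((w + h) • (YV 0 0 * XP 1 1) + h • (YV 0 1 * XP 1 0)))) = 0 := by
      rw [sub_eq_zero_of_eq (K2 1 1 0 0)]; simp
    have E9 : (w) • (XU 0 0 * (((w + h) • (XP 1 1 * YV 1 0) + h • (XP 1 1 * YV 1 0)) - ((w + h) • (YV 1 0 * XP 1 1) + h • (YV 1 1 * XP 1 0)))) = 0 := by
      rw [sub_eq_zero_of_eq (K2 1 1 1 0)]; simp
    have E10 : (w) • (YV 1 1 * ((h • (XP 1 0 * XU 0 0) + h • (XU 1 0 * XP 0 0)) - (h • (XU 0 0 * XP 1 0) + h • (XP 1 0 * XU 0 0)))) = 0 := by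
      rw [sub_eq_zero_of_eq (K3 0 0 1 0)]; simp
    have E11 : (h) • (YV 1 0 * ((h • (XP 1 1 * XU 0 0) + h • (XU 1 0 * XP 0 1)) - (h • (XU 0 0 * XP 1 1) + h • (XP 1 0 * XU 0 1)))) = 0 := by
      rw [sub_eq_zero_of_eq (K3 0 0 1 1)]; simp
    have E12 : (h) • (YV 1 0 * ((h • (XP 1 0 * XU 0 1) + h • (XU 1 1 * XP 0 0)) - (h • (XU 0 1 * XP 1 0) + h • (XP 1 1 * XU 0 0)))) = 0 := by
      rw [sub_eq_zero_of_eq (K3 0 1 1 0)]; simp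
    calc (w * (w + h + h)) • ((XU 0 0 * XP 1 1 - XU 1 0 * XP 0 1) * YV 1 0) - (w * (w + h + h)) • (YV 1 0 * (XU 0 0 * XP 1 1 - XU 1 0 * XP 0 1))
        = (h) • (((w • (XU 0 0 * YV 1 0) + h • (XU 1 0 * YV 0 0)) - (w • (YV 1 0 * XU 0 0) + h • (YV 1 0 * XU 0 0))) * XP 1 1) + (w) • (((w • (XU 0 0 * YV 1 0) + h • (XU 1 0 * YV 0 0)) - (w • (YV 1 0 * XU 0 0) + h • (YV 1 0 * XU 0 0))) * XP 1 1) + (h) • (((w • (XU 0 0 * YV 1 1) + h • (XU 1 0 * YV 0 1)) - (w • (YV 1 1 * XU 0 0) + h • (YV 1 0 * XU 0 1))) * XP 1 0) - (h) • (((w • (XU 1 0 * YV 1 0) + h • (XU 1 0 * YV 1 0)) - (w • (YV 1 0 * XU 1 0) + h • (YV 1 0 * XU 1 0))) * XP 0 1) - (w) • (((w • (XU 1 0 * YV 1 0) + h • (XU 1 0 * YV 1 0)) - (w • (YV 1 0 * XU 1 0) + h • (YV 1 0 * XU 1 0))) * XP 0 1) - (h) • (((w • (XU 1 0 * YV 1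 1) + h • (XU 1 0 * YV 1 1)) - (w • (YV 1 1 * XU 1 0) + h • (YV 1 0 * XU 1 1))) * XP 0 0) - (h) • (XU 1 0 * (((w + h) • (XP 0 1 * YV 1 0) + h • (XP 1 1 * YV 0 0)) - ((w + h) • (YV 1 0 * XP 0 1) + h • (YV 1 1 * XP 0 0)))) - (w) • (XU 1 0 * (((w + h) • (XP 0 1 * YV 1 0) + h • (XP 1 1 * YV 0 0)) - ((w + h) • (YV 1 0 * XP 0 1) + h • (YV 1 1 * XP 0 0)))) + (h) • (XU 1 0 * (((w + h) • (XP 1 1 * YV 0 0) + h • (XP 0 1 * YV 1 0)) - ((w + h) • (YV 0 0 * XP 1 1) + h • (YV 0 1 * XP 1 0)))) + (w) • (XU 0 0 * (((w + h) • (XP 1 1 * YV 1 0) + h • (XP 1 1 * YV 1 0)) - ((w + h) • (YV 1 0 * XP 1 1) + h • (YV 1 1 * XP 1 0)))) - (w) • (YV 1 1 * ((h • (XP 1 0 * XU 0 0) + h • (XU 1 0 * XP 0 0)) - (h • (XU 0 0 * XP 1 0) + h • (XP 1 0 * XU 0 0)))) - (h) • (YV 1 0 * ((h • (XP 1 1 *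 XU 0 0) + h • (XU 1 0 * XP 0 1)) - (h • (XU 0 0 * XP 1 1) + h • (XP 1 0 * XU 0 1)))) - (h) • (YV 1 0 * ((h • (XP 1 0 * XU 0 1) + h • (XU 1 1 * XP 0 0)) - (h • (XU 0 1 * XP 1 0) + h • (XP 1 1 * XU 0 0)))) := by
          simp only [smul_add, smul_sub, add_smul, smul_smul, mul_add, add_mul, mul_sub,
            sub_mul, smul_mul_assoc, mul_smul_comm, mul_assoc]
          module
      _ = 0 := by rw [E0, E1, E2, E3, E4, E5, E6, E7, E8, E9, E10, E11, E12]; simp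
  · rw [← sub_eq_zero]
    have E0 : (h) • (((w • (XU 0 0 * YV 1 1) + h • (XU 1 0 * YV 0 1)) - (w • (YV 1 1 * XU 0 0) + h • (YV 1 0 * XU 0 1))) * XP 1 1) = 0 := by
      rw [sub_eq_zero_of_eq (K1 0 0 1 1)]; simp
    have E1 : (w) • (((w • (XU 0 0 * YV 1 1) + h • (XU 1 0 * YV 0 1)) - (w • (YV 1 1 * XU 0 0) + h • (YV 1 0 * XU 0 1))) * XP 1 1) = 0 := by
      rw [sub_eq_zero_of_eq (K1 0 0 1 1)]; simp
    have E2 : (h) • (((w • (XU 1 0 * YV 1 1) + h • (XU 1 0 * YV 1 1)) - (w • (YV 1 1 * XU 1 0) + h • (YV 1 0 * XU 1 1))) * XP 0 1) = 0 := by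
      rw [sub_eq_zero_of_eq (K1 1 0 1 1)]; simp
    have E3 : (w) • (((w • (XU 1 0 * YV 1 1) + h • (XU 1 0 * YV 1 1)) - (w • (YV 1 1 * XU 1 0) + h • (YV 1 0 * XU 1 1))) * XP 0 1) = 0 := by
      rw [sub_eq_zero_of_eq (K1 1 0 1 1)]; simp
    have E4 : (h) • (XU 1 0 * (((w + h) • (XP 0 1 * YV 1 1) + h • (XP 1 1 * YV 0 1)) - ((w + h) • (YV 1 1 * XP 0 1) + h • (YV 1 1 * XP 0 1)))) = 0 := by
      rw [sub_eq_zero_of_eq (K2 0 1 1 1)]; simp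
    have E5 : (w) • (XU 1 0 * (((w + h) • (XP 0 1 * YV 1 1) + h • (XP 1 1 * YV 0 1)) - ((w + h) • (YV 1 1 * XP 0 1) + h • (YV 1 1 * XP 0 1)))) = 0 := by
      rw [sub_eq_zero_of_eq (K2 0 1 1 1)]; simp
    have E6 : (h) • (XU 1 0 * (((w + h) • (XP 1 1 * YV 0 1) + h • (XP 0 1 * YV 1 1)) - ((w + h) • (YV 0 1 * XP 1 1) + h • (YV 0 1 * XP 1 1)))) = 0 := by
      rw [sub_eq_zero_of_eq (K2 1 1 0 1)]; simp
    have E7 : (w) • (XU 0 0 * (((w + h) • (XP 1 1 * YV 1 1) + h • (XP 1 1 * YV 1 1)) - ((w + h) • (YV 1 1 * XP 1 1) + h • (YV 1 1 * XP 1 1)))) = 0 := by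
      rw [sub_eq_zero_of_eq (K2 1 1 1 1)]; simp
    have E8 : (h) • (YV 1 0 * ((h • (XP 1 1 * XU 0 1) + h • (XU 1 1 * XP 0 1)) - (h • (XU 0 1 * XP 1 1) + h • (XP 1 1 * XU 0 1)))) = 0 := by
      rw [sub_eq_zero_of_eq (K3 0 1 1 1)]; simp
    have E9 : (w) • (YV 1 0 * ((h • (XP 1 1 * XU 0 1) + h • (XU 1 1 * XP 0 1)) - (h • (XU 0 1 * XP 1 1) + h • (XP 1 1 * XU 0 1)))) = 0 := by
      rw [sub_eq_zero_of_eq (K3 0 1 1 1)]; simp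
    calc (w * (w + h + h)) • ((XU 0 0 * XP 1 1 - XU 1 0 * XP 0 1) * YV 1 1) - (w * (w + h + h)) • (YV 1 1 * (XU 0 0 * XP 1 1 - XU 1 0 * XP 0 1))
        = (h) • (((w • (XU 0 0 * YV 1 1) + h • (XU 1 0 * YV 0 1)) - (w • (YV 1 1 * XU 0 0) + h • (YV 1 0 * XU 0 1))) * XP 1 1) + (h) • (((w • (XU 0 0 * YV 1 1) + h • (XU 1 0 * YV 0 1)) - (w • (YV 1 1 * XU 0 0) + h • (YV 1 0 * XU 0 1))) * XP 1 1) + (w) • (((w • (XU 0 0 * YV 1 1) + h • (XU 1 0 * YV 0 1)) - (w • (YV 1 1 * XU 0 0) + h • (YV 1 0 * XU 0 1))) * XP 1 1) - (h) • (((w • (XU 1 0 * YV 1 1) + h • (XU 1 0 * YV 1 1)) - (w • (YV 1 1 * XU 1 0) + h • (YV 1 0 * XU 1 1))) * XP 0 1) - (h) • (((w • (XU 1 0 * YV 1 1) + h • (XU 1 0 * YV 1 1)) - (w • (YV 1 1 * XU 1 0) + h • (YV 1 0 * XU 1 1))) * XP 0 1) - (w) • (((w • (XU 1 0 * YV 1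 1) + h • (XU 1 0 * YV 1 1)) - (w • (YV 1 1 * XU 1 0) + h • (YV 1 0 * XU 1 1))) * XP 0 1) - (h) • (XU 1 0 * (((w + h) • (XP 0 1 * YV 1 1) + h • (XP 1 1 * YV 0 1)) - ((w + h) • (YV 1 1 * XP 0 1) + h • (YV 1 1 * XP 0 1)))) - (w) • (XU 1 0 * (((w + h) • (XP 0 1 * YV 1 1) + h • (XP 1 1 * YV 0 1)) - ((w + h) • (YV 1 1 * XP 0 1) + h • (YV 1 1 * XP 0 1)))) + (h) • (XU 1 0 * (((w + h) • (XP 1 1 * YV 0 1) + h • (XP 0 1 * YV 1 1)) - ((w + h) • (YV 0 1 * XP 1 1) + h • (YV 0 1 * XP 1 1)))) + (w) • (XU 0 0 * (((w + h) • (XP 1 1 * YV 1 1) + h • (XP 1 1 * YV 1 1)) - ((w + h) • (YV 1 1 * XP 1 1) + h • (YV 1 1 * XP 1 1)))) - (h) • (YV 1 0 * ((h • (XP 1 1 * XU 0 1) + h • (XU 1 1 * XP 0 1)) - (h • (XU 0 1 * XP 1 1) + h • (XP 1 1 * XU 0 1)))) - (h) • (YV 1 0 * ((h • (XP 1 1 *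 XU 0 1) + h • (XU 1 1 * XP 0 1)) - (h • (XU 0 1 * XP 1 1) + h • (XP 1 1 * XU 0 1)))) - (w) • (YV 1 0 * ((h • (XP 1 1 * XU 0 1) + h • (XU 1 1 * XP 0 1)) - (h • (XU 0 1 * XP 1 1) + h • (XP 1 1 * XU 0 1)))) := by
          simp only [smul_add, smul_sub, add_smul, smul_smul, mul_add, add_mul, mul_sub,
            sub_mul, smul_mul_assoc, mul_smul_comm, mul_assoc]
          module
      _ = 0 := by rw [E0, E1, E2, E3, E4, E5, E6, E7, E8, E9]; simp

/-- For a `2×2` monodromy matrix `T^α_β(u)` (indices `0,1` standing for `1,2`)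
satisfying the Yangian quadratic relation, the quantum determinant
`d(u) = T¹₁(u)T²₂(u+η) − T²₁(u)T¹₂(u+η)` is central:
`[d(u), T^γ_δ(v)] = 0` as an identity of polynomials in commuting
indeterminates `u, v`. -/
theorem quantum_determinant_central
    {R : Type*} [CommRing R] {A : Type*} [Ring A] [Algebra R A]
    (η : R) (T : Fin 2 → Fin 2 → A[X])
    (hrel : ∀ α₁ α₂ β₁ β₂ : Fin 2,
      (Polynomial.X - inV Polynomial.X) * (inU (T α₁ β₁) * inV (T α₂ β₂))
        + algebraMap R (Polynomial (A[X])) η * (inU (T α₂ β₁) * inV (T α₁ β₂))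
      = (Polynomial.X - inV Polynomial.X) * (inV (T α₂ β₂) * inU (T α₁ β₁))
        + algebraMap R (Polynomial (A[X])) η * (inV (T α₂ β₁) * inU (T α₁ β₂))) :
    ∀ γ δ : Fin 2,
      inU (T 0 0 * shiftBy (algebraMap R A η) (T 1 1)
            - T 1 0 * shiftBy (algebraMap R A η) (T 0 1)) * inV (T γ δ)
      = inV (T γ δ) *
          inU (T 0 0 * shiftBy (algebraMap R A η) (T 1 1)
            - T 1 0 * shiftBy (algebraMap R A η) (T 0 1)) := by
  intro γ δ
  have hcent : ∀ x : A, (algebraMap R A η) * x = x * (algebraMap R A η) := fun x =>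
    Algebra.commutes η x
  -- the algebra structure of `A[v][u]` over `R[v][u]`
  letI alg : Algebra (Polynomial (Polynomial R)) (Polynomial (Polynomial A)) :=
    RingHom.toAlgebra' (mapRingHom (mapRingHom (algebraMap R A)))
      (fun c x => by
        simp only [coe_mapRingHom]
        exact map_central (mapRingHom (algebraMap R A))
          (fun r y => by
            simpa only [coe_mapRingHom] using
              map_central (algebraMap R A) (fun r' y' => Algebra.commutes r' y') r y) c x)
  have hsm : ∀ (s : Polynomial (Polynomial R)) (z : Polynomial (A[X])),
      s • z = (mapRingHom (mapRingHom (algebraMap R A))) s * z := fun s z => rfl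
  have hw : ∀ z : Polynomial (A[X]),
      ((X : Polynomial (Polynomial R)) - C X) • z = (X - inV X) * z := by
    intro z
    rw [hsm]
    congr 1
    simp [inV]
  have halg : algebraMap R (Polynomial (A[X])) η = C (C (algebraMap R A η)) := by
    rw [Polynomial.algebraMap_apply, Polynomial.algebraMap_apply]
  have hh : ∀ z : Polynomial (A[X]),
      ((C (C η) : Polynomial (Polynomial R))) • z
        = algebraMap R (Polynomial (A[X])) η * z := by
    intro z
    rw [hsm, halg]
    congr 1
    simp
  -- the substitution homomorphisms
  have hcA : ∀ a : A, Commute ((C : A →+* A[X]) a) (X + C (algebraMap R A η)) := by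
    intro a
    refine Commute.add_right ((commute_X (C a)).symm) ?_
    show C a * C (algebraMap R A η) = C (algebraMap R A η) * C a
    rw [← C_mul, ← C_mul, hcent]
  set σ : A[X] →+* A[X] := eval₂RingHom' C (X + C (algebraMap R A η)) hcA with hσdef
  have hσ : ∀ p : A[X], σ p = shiftBy (algebraMap R A η) p := fun p => rfl
  have hcB : ∀ p : A[X], Commute ((C : A[X] →+* Polynomial (A[X])) p) (X + C (C (algebraMap R A η))) := by
    intro p
    refine Commute.add_right ((commute_X (C p)).symm) ?_
    show C p * C (C (algebraMap R A η)) = C (C (algebraMap R A η)) * C p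
    rw [← C_mul, ← C_mul, central_C_mul hcent p]
  set φ : Polynomial (A[X]) →+* Polynomial (A[X]) :=
    eval₂RingHom' C (X + C (C (algebraMap R A η))) hcB with hφdef
  set ψ : Polynomial (A[X]) →+* A[X] :=
    eval₂RingHom' σ X (fun p => (commute_X (σ p)).symm) with hψdef
  have hσX : σ (X : A[X]) = X + C (algebraMap R A η) := eval₂_X _ _
  have hσC : ∀ a : A, σ (C a) = C a := fun a => eval₂_C _ _
  have hφC : ∀ p : A[X], φ (C p) = C p := fun p => eval₂_C _ _
  have hψC : ∀ p : A[X], ψ (C p) = shiftBy (algebraMap R A η) p := fun p => eval₂_C _ _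
  have hφX : φ (X : Polynomial (A[X])) = X + C (C (algebraMap R A η)) := eval₂_X _ _
  have hφV : ∀ p : A[X], φ (inV p) = inV p := fun p => eval₂_C _ _
  have hφU : ∀ p : A[X], φ (inU p) = inU (shiftBy (algebraMap R A η) p) := by
    have hext : φ.comp (mapRingHom (C : A →+* A[X]))
        = (mapRingHom (C : A →+* A[X])).comp σ := by
      apply Polynomial.ringHom_ext
      · intro a
        simp only [RingHom.comp_apply, coe_mapRingHom, Polynomial.map_C, hσC]
        exact hφC (C a)
      · simp only [RingHom.comp_apply, coe_mapRingHom, Polynomial.map_X, hσX, hφX,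
          Polynomial.map_add, Polynomial.map_C]
    intro p
    have := RingHom.congr_fun hext p
    simpa [inU, hσ] using this
  have hψX : ψ (X : Polynomial (A[X])) = X := eval₂_X _ _
  have hψV : ∀ p : A[X], ψ (inV p) = shiftBy (algebraMap R A η) p := fun p => eval₂_C _ _
  have hψU : ∀ p : A[X], ψ (inU p) = p := by
    have hext : ψ.comp (mapRingHom (C : A →+* A[X])) = RingHom.id (A[X]) := by
      apply Polynomial.ringHom_ext
      · intro a
        simp only [RingHom.comp_apply, coe_mapRingHom, Polynomial.map_C, RingHom.id_apply]
        rw [hψC]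
        exact eval₂_C _ _
      · simp only [RingHom.comp_apply, coe_mapRingHom, Polynomial.map_X, hψX, RingHom.id_apply]
    intro p
    have := RingHom.congr_fun hext p
    simpa [inU] using this
  -- the three families of commutation relations, in `smul` form
  have K1 : ∀ i j k l : Fin 2,
      ((X : Polynomial (Polynomial R)) - C X) • (inU (T i j) * inV (T k l))
          + (C (C η) : Polynomial (Polynomial R)) • (inU (T k j) * inV (T i l))
        = ((X : Polynomial (Polynomial R)) - C X) • (inV (T k l) * inU (T i j))
          + (C (C η) : Polynomial (Polynomial R)) • (inV (T k j) * inU (T i l)) := by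
    intro i j k l
    rw [hw, hw, hh, hh]
    exact hrel i k j l
  have hwh : ∀ z : Polynomial (A[X]),
      (((X : Polynomial (Polynomial R)) - C X) + C (C η)) • z
        = (X + C (C (algebraMap R A η)) - inV X) * z := by
    intro z
    rw [hsm]
    congr 1
    simp only [map_add, map_sub, coe_mapRingHom, Polynomial.map_X, Polynomial.map_C, inV]
    abel
  have K2 : ∀ i j k l : Fin 2,
      (((X : Polynomial (Polynomial R)) - C X) + C (C η)) •
            (inU (shiftBy (algebraMap R A η) (T i j)) * inV (T k l))
          + (C (C η) : Polynomial (Polynomial R)) • (inU (shiftBy (algebraMap R A η) (T k j)) * inV (T i l))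
        = (((X : Polynomial (Polynomial R)) - C X) + C (C η)) •
            (inV (T k l) * inU (shiftBy (algebraMap R A η) (T i j)))
          + (C (C η) : Polynomial (Polynomial R)) • (inV (T k j) * inU (shiftBy (algebraMap R A η) (T i l))) := by
    intro i j k l
    have base := congrArg φ (hrel i k j l)
    simp only [map_add, map_mul, map_sub, hφX, hφV, hφU, halg, hφC] at base
    rw [hwh, hwh, hh, hh, halg]
    exact base
  have K3 : ∀ i j k l : Fin 2,
      (C (C η) : Polynomial (Polynomial R)) • (inU (shiftBy (algebraMap R A η) (T k l)) * inU (T i j))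
          + (C (C η) : Polynomial (Polynomial R)) • (inU (T k j) * inU (shiftBy (algebraMap R A η) (T i l)))
        = (C (C η) : Polynomial (Polynomial R)) • (inU (T i j) * inU (shiftBy (algebraMap R A η) (T k l)))
          + (C (C η) : Polynomial (Polynomial R)) • (inU (shiftBy (algebraMap R A η) (T k j)) * inU (T i l)) := by
    intro i j k l
    have base0 := congrArg ψ (hrel i k j l)
    simp only [map_add, map_mul, map_sub, hψX, hψV, hψU, halg, hψC] at base0
    have hXV : shiftBy (algebraMap R A η) (X : A[X]) = X + C (algebraMap R A η) := X_comp
    have hshiftC : shiftBy (algebraMap R A η) (C (algebraMap R A η) : A[X])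
        = C (algebraMap R A η) := eval₂_C _ _
    rw [hXV, hshiftC] at base0
    have base1 : C (algebraMap R A η) * (shiftBy (algebraMap R A η) (T k l) * T i j) + C (algebraMap R A η) * (T k j * shiftBy (algebraMap R A η) (T i l))
        = C (algebraMap R A η) * (T i j * shiftBy (algebraMap R A η) (T k l)) + C (algebraMap R A η) * (shiftBy (algebraMap R A η) (T k j) * T i l) := by
      rw [← sub_eq_zero]
      rw [← sub_eq_zero] at base0
      calc C (algebraMap R A η) * (shiftBy (algebraMap R A η) (T k l) * T i j) + C (algebraMap R A η) * (T k j * shiftBy (algebraMap R A η) (T i l))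
            - (C (algebraMap R A η) * (T i j * shiftBy (algebraMap R A η) (T k l)) + C (algebraMap R A η) * (shiftBy (algebraMap R A η) (T k j) * T i l))
          = (X - (X + C (algebraMap R A η))) * (T i j * shiftBy (algebraMap R A η) (T k l))
              + C (algebraMap R A η) * (T k j * shiftBy (algebraMap R A η) (T i l))
            - ((X - (X + C (algebraMap R A η))) * (shiftBy (algebraMap R A η) (T k l) * T i j)
              + C (algebraMap R A η) * (shiftBy (algebraMap R A η) (T k j) * T i l)) := by
            rw [sub_add_cancel_left, neg_mul, neg_mul]
            abel
        _ = 0 := base0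
    have base2 := congrArg (mapRingHom (C : A →+* A[X])) base1
    simp only [map_add, map_mul, coe_mapRingHom, Polynomial.map_C] at base2
    rw [hh, hh, hh, hh, halg]
    simp only [inU]
    exact base2
  -- assemble via the key lemma
  have main := key_lemma (S := Polynomial (Polynomial R)) (B := Polynomial (A[X]))
    ((X : Polynomial (Polynomial R)) - C X) (C (C η) : Polynomial (Polynomial R))
    (fun i j => inU (T i j)) (fun i j => inU (shiftBy (algebraMap R A η) (T i j)))
    (fun i j => inV (T i j)) K1 K2 K3 γ δ
  rw [hsm, hsm] at main
  have hD : inU (T 0 0 * shiftBy (algebraMap R A η) (T 1 1) - T 1 0 * shiftBy (algebraMap R A η) (T 0 1))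
      = inU (T 0 0) * inU (shiftBy (algebraMap R A η) (T 1 1)) - inU (T 1 0) * inU (shiftBy (algebraMap R A η) (T 0 1)) := by
    simp [inU]
  rw [hD]
  -- the multiplier is monic, hence left-regular
  have hMb : Monic ((mapRingHom (mapRingHom (algebraMap R A)))
      (((X : Polynomial (Polynomial R)) - C X) * ((X - C X) + C (C η) + C (C η)))) := by
    have he : (mapRingHom (mapRingHom (algebraMap R A)))
        (((X : Polynomial (Polynomial R)) - C X) * ((X - C X) + C (C η) + C (C η)))
        = ((X : Polynomial (A[X])) - C X) * (X - C (X - C (algebraMap R A η) - C (algebraMap R A η))) := by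
      simp only [map_mul, map_add, map_sub, coe_mapRingHom, Polynomial.map_X,
        Polynomial.map_C, Polynomial.map_ofNat, Polynomial.map_mul]
      congr 1
      abel
    rw [he]
    exact (monic_X_sub_C (X : A[X])).mul (monic_X_sub_C _)
  exact hMb.isRegular.left main
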